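/- Let a : ℤ → ℤ satisfy the Ward recurrence families: for all m, n ∈ ℤ, a(m+n)·a(m−n) = a(n)²·a(m−1)·a(m+1) − a(n−1)·a(n+1)·a(m)², and a(1)·a(2)·a(m+n+1)·a(m−n) = a(n)·a(n+1)·a(m−1)·a(m+2) − a(n−1)·a(n+2)·a(m)·a(m+1). Suppose moreover that consecutive terms are coprime: for all n ∈ ℤ, IsCoprime (a(n)) (a(n+1)) in ℤ. Then for every prime p and every k ≥ 1, the set S = {n ∈ ℤ : p^k ∣ a(n)} either has at most one element or there exist c ∈ ℤ and d ≥ 1 such that S = {c + j·d : j ∈ ℤ}; i.e. in an elliptic divisibility sequence whose subsequent values are coprime, the multiples of powers of primes are equally spaced. -/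

import Mathlib

private def pv (p : ℕ) (z : ℤ) : ℕ := z.natAbs.factorization p

private lemma pv_dvd_iff {p : ℕ} (hp : p.Prime) {z : ℤ} (hz : z ≠ 0) (j : ℕ) :
    (p : ℤ) ^ j ∣ z ↔ j ≤ pv p z := by
  have h1 : (p : ℤ) ^ j ∣ z ↔ p ^ j ∣ z.natAbs := by
    rw [← Int.natAbs_dvd_natAbs, Int.natAbs_pow, Int.natAbs_natCast]
  rw [h1, pv, Nat.Prime.pow_dvd_iff_le_factorization hp (Int.natAbs_ne_zero.mpr hz)]

private lemma pv_mul {p : ℕ} {y z : ℤ} (hy : y ≠ 0) (hz : z ≠ 0) :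
    pv p (y * z) = pv p y + pv p z := by
  unfold pv
  rw [Int.natAbs_mul,
    Nat.factorization_mul (Int.natAbs_ne_zero.mpr hy) (Int.natAbs_ne_zero.mpr hz)]
  simp

private lemma pv_eq_zero {p : ℕ} {z : ℤ} (h : ¬ (p : ℤ) ∣ z) : pv p z = 0 := by
  unfold pv
  apply Nat.factorization_eq_zero_of_not_dvd
  intro hd
  exact h (by rwa [← Int.natAbs_dvd_natAbs, Int.natAbs_natCast])

/-- In an elliptic divisibility sequence (satisfying Ward's two recurrence
families) whose consecutive terms are coprime, the multiples of powers of
primes are equally spaced. -/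
theorem eds_prime_powers_equally_spaced (a : ℤ → ℤ)
    (hW1 : ∀ m n : ℤ, a (m + n) * a (m - n) =
      (a n) ^ 2 * (a (m - 1) * a (m + 1)) - a (n - 1) * a (n + 1) * (a m) ^ 2)
    (hW2 : ∀ m n : ℤ, a 1 * a 2 * (a (m + n + 1) * a (m - n)) =
      a n * a (n + 1) * (a (m - 1) * a (m + 2)) - a (n - 1) * a (n + 2) * (a m * a (m + 1)))
    (hcop : ∀ n : ℤ, IsCoprime (a n) (a (n + 1)))
    (p : ℕ) (hp : p.Prime) (k : ℕ) (hk : 1 ≤ k) :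
    {n : ℤ | (p : ℤ) ^ k ∣ a n}.Subsingleton ∨
      ∃ (c d : ℤ), 1 ≤ d ∧ {n : ℤ | (p : ℤ) ^ k ∣ a n} = {x : ℤ | ∃ j : ℤ, x = c + j * d} := by
  clear hW2
  have hPp : Prime (p : ℤ) := Nat.prime_iff_prime_int.mp hp
  -- a 0 = 0
  have ha0 : a 0 = 0 := by
    have h := hW1 0 0
    norm_num at h
    have h0 : a 0 * a 0 = 0 := by linear_combination h
    exact mul_self_eq_zero.mp h0
  -- a 1 and a (-1) are units
  have hu1 : IsUnit (a 1) := by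
    have h := hcop 0
    rw [ha0] at h
    norm_num at h
    exact isCoprime_zero_left.mp h
  have hum1 : IsUnit (a (-1)) := by
    have h := hcop (-1)
    norm_num at h
    rw [ha0] at h
    exact isCoprime_zero_right.mp h
  -- a (-n) = ± a n
  have hneg : ∀ n : ℤ, a (-n) = a n ∨ a (-n) = -a n := by
    intro n
    have e1 := hW1 0 n
    have e2 := hW1 0 (-n)
    simp only [zero_add, zero_sub, neg_neg, sub_neg_eq_add] at e1 e2
    rw [ha0] at e1 e2
    have hw : a n * a (-n) = a n ^ 2 * (a (-1) * a 1) := by linear_combination e1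
    have hw2 : a (-n) * a n = a (-n) ^ 2 * (a (-1) * a 1) := by linear_combination e2
    have hsq : (a (-n)) ^ 2 * (a (-1) * a 1) = (a n) ^ 2 * (a (-1) * a 1) := by
      rw [← hw, ← hw2, mul_comm]
    have hw0 : a (-1) * a 1 ≠ 0 := mul_ne_zero hum1.ne_zero hu1.ne_zero
    have hsq' : (a (-n)) ^ 2 = (a n) ^ 2 := mul_right_cancel₀ hw0 hsq
    have hfac : (a (-n) - a n) * (a (-n) + a n) = 0 := by linear_combination hsq'
    rcases mul_eq_zero.mp hfac with h | h
    · exact Or.inl (by linarith)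
    · exact Or.inr (by linarith)
  -- dvd transfers through negation
  have hnegdvd : ∀ (c : ℤ) (n : ℤ), c ∣ a n → c ∣ a (-n) := by
    intro c n h
    rcases hneg n with h' | h'
    · rwa [h']
    · rw [h']; exact dvd_neg.mpr h
  -- neighbours of p-divisible terms are p-units
  have hnb : ∀ x : ℤ, (p : ℤ) ∣ a x → ¬ (p : ℤ) ∣ a (x + 1) := by
    intro x hx hx1
    exact hPp.not_unit ((hcop x).isUnit_of_dvd' hx hx1)
  have hnb' : ∀ x : ℤ, (p : ℤ) ∣ a x → ¬ (p : ℤ) ∣ a (x - 1) := by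
    intro x hx hx1
    have h := hcop (x - 1)
    have hxx : x - 1 + 1 = x := by ring
    rw [hxx] at h
    exact hPp.not_unit (h.isUnit_of_dvd' hx1 hx)
  -- the set of p-divisible indices is closed under differences
  have hF1 : ∀ z N : ℤ, (p : ℤ) ∣ a N → (p : ℤ) ∣ a (z + N) → (p : ℤ) ∣ a z := by
    intro z N hN hzN
    have h := hW1 z N
    have hd1 : (p : ℤ) ∣ a N ^ 2 * (a (z - 1) * a (z + 1)) :=
      dvd_mul_of_dvd_left (dvd_pow hN (by norm_num)) _
    have hd2 : (p : ℤ) ∣ a (z + N) * a (z - N) := dvd_mul_of_dvd_left hzN _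
    have hd3 : (p : ℤ) ∣ a (N - 1) * a (N + 1) * a z ^ 2 := by
      have heq : a (N - 1) * a (N + 1) * a z ^ 2 =
          a N ^ 2 * (a (z - 1) * a (z + 1)) - a (z + N) * a (z - N) := by
        linear_combination h
      rw [heq]
      exact dvd_sub hd1 hd2
    rcases hPp.dvd_mul.mp hd3 with h' | h'
    · rcases hPp.dvd_mul.mp h' with h'' | h''
      · exact absurd h'' (hnb' N hN)
      · exact absurd h'' (hnb N hN)
    · exact hPp.dvd_of_dvd_pow h'
  have hS1 : ∀ x y : ℤ, (p : ℤ) ∣ a x → (p : ℤ) ∣ a y → (p : ℤ) ∣ a (x + y) := by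
    intro x y hx hy
    have hny : (p : ℤ) ∣ a (-y) := hnegdvd _ _ hy
    exact hF1 (x + y) (-y) hny (by rwa [add_neg_cancel_right])
  -- Key local valuation lemma
  have LL : ∀ n x : ℤ, (p : ℤ) ^ k ∣ a n → a x ≠ 0 → (p : ℤ) ∣ a x → pv p (a x) < k →
      a (x + n) ≠ 0 ∧ a (x - n) ≠ 0 ∧
        pv p (a (x + n)) + pv p (a (x - n)) = 2 * pv p (a x) := by
    intro n x hn hx0 hpx hdk
    set d := pv p (a x) with hd
    have hpn : (p : ℤ) ∣ a n := dvd_trans (dvd_pow_self (p : ℤ) (by omega : k ≠ 0)) hn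
    have hN1 : ¬ (p : ℤ) ∣ a (n - 1) := hnb' n hpn
    have hN2 : ¬ (p : ℤ) ∣ a (n + 1) := hnb n hpn
    have hN10 : a (n - 1) ≠ 0 := fun h0 => hN1 (h0 ▸ dvd_zero _)
    have hN20 : a (n + 1) ≠ 0 := fun h0 => hN2 (h0 ▸ dvd_zero _)
    have h := hW1 x n
    have hB0 : a (n - 1) * a (n + 1) * a x ^ 2 ≠ 0 :=
      mul_ne_zero (mul_ne_zero hN10 hN20) (pow_ne_zero _ hx0)
    have hvB : pv p (a (n - 1) * a (n + 1) * a x ^ 2) = 2 * d := by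
      have hxx : a x ^ 2 = a x * a x := by ring
      rw [pv_mul (mul_ne_zero hN10 hN20) (pow_ne_zero _ hx0),
        pv_mul hN10 hN20, pv_eq_zero hN1, pv_eq_zero hN2, hxx, pv_mul hx0 hx0]
      omega
    have hA : (p : ℤ) ^ (2 * d + 1) ∣ a n ^ 2 * (a (x - 1) * a (x + 1)) := by
      apply dvd_mul_of_dvd_left
      have h2k : (p : ℤ) ^ (2 * k) ∣ a n ^ 2 := by
        have hxx : a n ^ 2 = a n * a n := by ring
        rw [hxx, show 2 * k = k + k by ring, pow_add]
        exact mul_dvd_mul hn hn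
      exact dvd_trans (pow_dvd_pow _ (by omega)) h2k
    have hBnd : ¬ (p : ℤ) ^ (2 * d + 1) ∣ a (n - 1) * a (n + 1) * a x ^ 2 := by
      intro hcon
      have := (pv_dvd_iff hp hB0 _).mp hcon
      omega
    have hBd : (p : ℤ) ^ (2 * d) ∣ a (n - 1) * a (n + 1) * a x ^ 2 :=
      (pv_dvd_iff hp hB0 _).mpr (by omega)
    have hT0 : a (x + n) * a (x - n) ≠ 0 := by
      intro h0
      apply hBnd
      have heq : a (n - 1) * a (n + 1) * a x ^ 2 =
          a n ^ 2 * (a (x - 1) * a (x + 1)) - a (x + n) * a (x - n) := by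
        linear_combination h
      rw [heq, h0, sub_zero]
      exact hA
    have hTd : (p : ℤ) ^ (2 * d) ∣ a (x + n) * a (x - n) := by
      rw [h]
      exact dvd_sub (dvd_trans (pow_dvd_pow _ (by omega)) hA) hBd
    have hTnd : ¬ (p : ℤ) ^ (2 * d + 1) ∣ a (x + n) * a (x - n) := by
      intro hcon
      apply hBnd
      have heq : a (n - 1) * a (n + 1) * a x ^ 2 =
          a n ^ 2 * (a (x - 1) * a (x + 1)) - a (x + n) * a (x - n) := by
        linear_combination h
      rw [heq]
      exact dvd_sub hA hcon
    have hx1 : a (x + n) ≠ 0 := fun h0 => hT0 (by rw [h0, zero_mul])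
    have hx2 : a (x - n) ≠ 0 := fun h0 => hT0 (by rw [h0, mul_zero])
    refine ⟨hx1, hx2, ?_⟩
    have h1 := (pv_dvd_iff hp hT0 (2 * d)).mp hTd
    have h2 : ¬ (2 * d + 1 ≤ pv p (a (x + n) * a (x - n))) :=
      fun hle => hTnd ((pv_dvd_iff hp hT0 _).mpr hle)
    rw [pv_mul hx1 hx2] at h1 h2
    omega
  -- closure of the p^k set under addition
  have CK : ∀ m n : ℤ, (p : ℤ) ^ k ∣ a m → (p : ℤ) ^ k ∣ a n → (p : ℤ) ^ k ∣ a (m + n) := by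
    intro m n hm hn
    by_contra hcon
    have hne : a (m + n) ≠ 0 := fun h0 => hcon (h0 ▸ dvd_zero _)
    set e := pv p (a (m + n)) with he
    have hek : e < k := by
      by_contra hge
      exact hcon ((pv_dvd_iff hp hne k).mpr (by omega))
    have hpm : (p : ℤ) ∣ a m := dvd_trans (dvd_pow_self (p : ℤ) (by omega : k ≠ 0)) hm
    have hpn : (p : ℤ) ∣ a n := dvd_trans (dvd_pow_self (p : ℤ) (by omega : k ≠ 0)) hn
    have hall : ∀ s : ℕ, (p : ℤ) ∣ a (m + (s : ℤ) * n) := by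
      intro s
      induction s with
      | zero => simpa using hpm
      | succ t ih =>
          have heq : m + ((t : ℤ) + 1) * n = (m + (t : ℤ) * n) + n := by ring
          push_cast
          rw [heq]
          exact hS1 _ _ ih hpn
    have hQ : ∀ t : ℕ, a (m + ((t : ℤ) + 1) * n) ≠ 0 ∧ a (m + ((t : ℤ) + 2) * n) ≠ 0 ∧
        pv p (a (m + ((t : ℤ) + 2) * n)) + 1 ≤ pv p (a (m + ((t : ℤ) + 1) * n)) ∧
        pv p (a (m + ((t : ℤ) + 1) * n)) + t ≤ e ∧
        pv p (a (m + ((t : ℤ) + 2) * n)) + t + 1 ≤ e := by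
      intro t
      induction t with
      | zero =>
          have hLL := LL n (m + n) hn hne
            (by have := hall 1; simpa using this) (by omega)
          obtain ⟨ha1, ha2, hsum⟩ := hLL
          have e1 : m + n + n = m + (((0 : ℕ) : ℤ) + 2) * n := by push_cast; ring
          have e2 : m + n - n = m := by ring
          rw [e1] at ha1 hsum
          rw [e2] at ha2 hsum
          have hvm : k ≤ pv p (a m) := (pv_dvd_iff hp ha2 k).mp hm
          have h1n' : m + (((0 : ℕ) : ℤ) + 1) * n = m + n := by push_cast; ring
          rw [h1n']
          exact ⟨hne, ha1, by omega, by omega, by omega⟩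
      | succ t ih =>
          obtain ⟨ih1, ih2, ih3, ih4, ih5⟩ := ih
          have hpx : (p : ℤ) ∣ a (m + ((t : ℤ) + 2) * n) := by
            have h2 := hall (t + 2)
            have heq : m + ((t + 2 : ℕ) : ℤ) * n = m + ((t : ℤ) + 2) * n := by push_cast; ring
            rwa [heq] at h2
          have hLL := LL n (m + ((t : ℤ) + 2) * n) hn ih2 hpx (by omega)
          obtain ⟨ha1, ha2, hsum⟩ := hLL
          have e1 : m + ((t : ℤ) + 2) * n + n = m + (((t : ℤ) + 1) + 2) * n := by ring
          have e2 : m + ((t : ℤ) + 2) * n - n = m + ((t : ℤ) + 1) * n := by ring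
          rw [e1] at ha1 hsum
          rw [e2] at ha2 hsum
          have c1 : m + (((t + 1 : ℕ) : ℤ) + 1) * n = m + ((t : ℤ) + 2) * n := by
            push_cast; ring
          have c2 : m + (((t + 1 : ℕ) : ℤ) + 2) * n = m + (((t : ℤ) + 1) + 2) * n := by
            push_cast; ring
          rw [c1, c2]
          exact ⟨ih2, ha1, by omega, by omega, by omega⟩
    have hfinal := hQ e
    omega
  -- assemble: the set is a subgroup of ℤ
  let H : AddSubgroup ℤ :=
    { carrier := {n : ℤ | (p : ℤ) ^ k ∣ a n}
      zero_mem' := by simp only [Set.mem_setOf_eq, ha0]; exact dvd_zero _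
      add_mem' := fun {x y} hx hy => CK x y hx hy
      neg_mem' := fun {x} hx => hnegdvd _ _ hx }
  obtain ⟨g, hg⟩ := Int.subgroup_cyclic H
  have hmem : ∀ x : ℤ, (p : ℤ) ^ k ∣ a x ↔ ∃ j : ℤ, j * g = x := by
    intro x
    have hx : x ∈ H ↔ x ∈ AddSubgroup.closure ({g} : Set ℤ) := by rw [← hg]
    rw [AddSubgroup.mem_closure_singleton] at hx
    simp only [zsmul_eq_mul] at hx
    exact hx
  rcases eq_or_ne g 0 with hg0 | hg0
  · left
    intro x hx y hy
    obtain ⟨j1, hj1⟩ := (hmem x).mp hx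
    obtain ⟨j2, hj2⟩ := (hmem y).mp hy
    rw [hg0] at hj1 hj2
    simp only [mul_zero] at hj1 hj2
    rw [← hj1, ← hj2]
  · right
    refine ⟨0, |g|, by have := abs_pos.mpr hg0; omega, ?_⟩
    ext x
    simp only [Set.mem_setOf_eq]
    rw [hmem x]
    rcases abs_choice g with habs | habs
    · constructor
      · rintro ⟨j, hj⟩
        exact ⟨j, by rw [habs]; omega⟩
      · rintro ⟨j, hj⟩
        exact ⟨j, by rw [habs] at hj; omega⟩
    · constructor
      · rintro ⟨j, hj⟩
        refine ⟨-j, ?_⟩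
        rw [habs]
        ring_nf
        omega
      · rintro ⟨j, hj⟩
        refine ⟨-j, ?_⟩
        rw [habs] at hj
        ring_nf at hj ⊢
        omega
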